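/- Let P = (x,y) be a point on the Huff curve E with x·y ≠ 0. Then each of the eight points (x,y), (−x,−y), (1/x,−y), (−1/x,y), (−x,1/y), (x,−1/y), (1/x,1/y), (−1/x,−1/y) also lies on E, and the compression function f₈ takes the same value at all eight of these points: f₈(x,y) = f₈(−x,−y) = f₈(1/x,−y) = f₈(−1/x,y) = f₈(−x,1/y) = f₈(x,−1/y) = f₈(1/x,1/y) = f₈(−1/x,−1/y). -/

import Mathlib

/-- The degree-8 compression function on the Huff curve. -/
def huffF8 {K : Type*} [Field K] (x y : K) : K :=
  x * y + 1 / (x * y) - x / y - y / x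

/-- The Huff curve predicate for `a·x·(y² − 1) = b·y·(x² − 1)`. -/
def onHuff {K : Type*} [Field K] (a b x y : K) : Prop :=
  a * x * (y ^ 2 - 1) = b * y * (x ^ 2 - 1)

/-- The eight points `(±x^{±1}, ±y^{±1})` obtained from a point `(x,y)` on the
Huff curve by `±` and translations by the 2-torsion points at infinity all lie
on the curve and take the same value of the degree-8 compression
`f₈(x,y) = xy + 1/(xy) − x/y − y/x`. -/
theorem huff_deg8_orbit {K : Type*} [Field K] (a b : K)
    (hchar : (2 : K) ≠ 0) (hab : a * b ≠ 0) (hab2 : a ^ 2 ≠ b ^ 2)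
    (x y : K) (hxy : x * y ≠ 0)
    (hP : onHuff a b x y) :
    (onHuff a b x y ∧ onHuff a b (-x) (-y) ∧ onHuff a b (1 / x) (-y) ∧
      onHuff a b (-(1 / x)) y ∧ onHuff a b (-x) (1 / y) ∧ onHuff a b x (-(1 / y)) ∧
      onHuff a b (1 / x) (1 / y) ∧ onHuff a b (-(1 / x)) (-(1 / y))) ∧
    (huffF8 x y = huffF8 (-x) (-y) ∧
      huffF8 x y = huffF8 (1 / x) (-y) ∧
      huffF8 x y = huffF8 (-(1 / x)) y ∧
      huffF8 x y = huffF8 (-x) (1 / y) ∧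
      huffF8 x y = huffF8 x (-(1 / y)) ∧
      huffF8 x y = huffF8 (1 / x) (1 / y) ∧
      huffF8 x y = huffF8 (-(1 / x)) (-(1 / y))) := by
  have hx : x ≠ 0 := fun h => hxy (by simp [h])
  have hy : y ≠ 0 := fun h => hxy (by simp [h])
  unfold onHuff huffF8 at *
  refine ⟨⟨hP, ?_, ?_, ?_, ?_, ?_, ?_, ?_⟩, ?_, ?_, ?_, ?_, ?_, ?_, ?_⟩
  · field_simp; linear_combination -hP
  · field_simp; linear_combination hP
  · field_simp; linear_combination -hP
  · field_simp; linear_combination hP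
  · field_simp; linear_combination -hP
  · field_simp; linear_combination -hP
  · field_simp; linear_combination hP
  all_goals
    simp only [one_div, mul_inv, inv_inv, inv_neg, div_eq_mul_inv, neg_mul, mul_neg, neg_neg]
    try field_simp
    try ring
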